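/- The Curry-like set for the sentence 'there is no universal set' is paradoxical: letting φ be the L-sentence ¬∃y∀x(x∈y ↔ x=x), the theory consisting of BST together with the UC-instance ∃y∀x(x∈y ↔ (x∈x → φ)) is trivial, i.e., it is unsatisfiable. -/
import Mathlib


open FirstOrder FirstOrder.Language

namespace SetParadox

/-- The language with a single binary relation symbol `∈`. -/
def L : Language := ⟨fun _ => Empty, fun n => match n with | 2 => Unit | _ => Empty⟩

/-- The membership relation symbol. -/
def memRel : L.Relations 2 := Unit.unit

/-- `memF t₁ t₂` is the atomic formula `t₁ ∈ t₂`. -/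
def memF {n : ℕ} (t₁ t₂ : L.Term (Empty ⊕ Fin n)) : L.BoundedFormula Empty n :=
  memRel.boundedFormula₂ t₁ t₂

/-- Extensionality: `∀y∀z(∀x(x∈y ↔ x∈z) → y=z)`. -/
def extAx : L.Sentence :=
  ∀' ∀' ((∀' (memF (&2) (&0) ⇔ memF (&2) (&1))) ⟹ ((&0) =' (&1)))

/-- Basic set theory: the theory whose only axiom is extensionality. -/
def BST : L.Theory := {extAx}

/-- The UC-instance `∃y∀x(x∈y ↔ φ(x))` determined by a formula `φ` with one free
variable `x` (so that `y` does not occur free in `φ`). -/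
def UCinst (φ : L.BoundedFormula Empty 1) : L.Sentence :=
  ∃' ∀' (memF (&1) (&0) ⇔ φ.liftAt 1 0)


/-- The sentence `∃y∀x(x∈y ↔ x=x)` asserting the existence of the universal set. -/
def univExists : L.Sentence :=
  ∃' ∀' (memF (&1) (&0) ⇔ ((&1) =' (&1)))

lemma realize_memF {M : Type*} [L.Structure M] {n : ℕ}
    {t₁ t₂ : L.Term (Empty ⊕ Fin n)} {v : Empty → M} {xs : Fin n → M} :
    (memF t₁ t₂).Realize v xs ↔
      Structure.RelMap memRel ![t₁.realize (Sum.elim v xs), t₂.realize (Sum.elim v xs)] :=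
  BoundedFormula.realize_rel₂

/-- The Curry-like set for `φ := ¬∃y∀x(x∈y ↔ x=x)` is paradoxical: `BST` plus the
UC-instance `∃y∀x(x∈y ↔ (x∈x → φ))` is trivial, i.e. unsatisfiable. -/
theorem curry_like_set_paradoxical :
    ¬ (BST ∪ {UCinst (memF (&0) (&0) ⟹ (∼univExists).liftAt 1 0)}).IsSatisfiable := by
  rintro ⟨M⟩
  have h : M ⊨ UCinst (memF (&0) (&0) ⟹ (∼univExists).liftAt 1 0) :=
    Theory.realize_sentence_of_mem
      (BST ∪ {UCinst (memF (&0) (&0) ⟹ (∼univExists).liftAt 1 0)})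
      (Set.mem_union_right _ rfl)
  simp only [UCinst, univExists, Sentence.Realize, Formula.Realize,
    BoundedFormula.realize_ex, BoundedFormula.realize_all, BoundedFormula.realize_iff,
    BoundedFormula.realize_imp, BoundedFormula.realize_not,
    BoundedFormula.realize_liftAt_one (Nat.zero_le _), realize_memF,
    BoundedFormula.realize_bdEqual, Term.realize_var, Sum.elim_inr,
    Function.comp_apply] at h
  simp [Fin.snoc] at h
  obtain ⟨c, hc⟩ := h
  have hcc : Structure.RelMap memRel ![c, c] := by
    by_contra hn
    exact hn ((hc c).2 fun h' => absurd h' hn)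
  have hP := (hc c).1 hcc hcc
  obtain ⟨z, hz⟩ := hP c
  exact hz ((hc z).2 fun _ => hP)

end SetParadox
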